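/- arXiv:math/0605306 — 2 statements merged into one kernel-verified Lean document; each statement's English description precedes it below -/
import Mathlib

section
/- Let ρ and σ be two well agreeing near weights on R and let R' be an F-subalgebra of R. If H(R') = H(R), then R' = R. -/
structure NearWeight (F R : Type*) [Field F] [CommRing R] [Algebra F R] where
  w : R → WithBot ℕ
  N0 : ∀ f : R, w f = ⊥ ↔ f = 0
  N1 : ∀ (c : F) (f : R), c ≠ 0 → w (c • f) = w f
  N2 : ∀ f g : R, w (f + g) ≤ max (w f) (w g)
  N3 : ∀ f g h : R, w f < w g → w (f * h) ≤ w (g * h)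
  N3' : ∀ f g h : R, w f < w g → w 1 < w h → w (f * h) < w (g * h)
  N4 : ∀ f g : R, w 1 < w f → w 1 < w g → w f = w g →
      ∃ c : F, c ≠ 0 ∧ w (f - c • g) < w f
  N5 : ∀ f g : R, w (f * g) ≤ w f + w g
  N5' : ∀ f g : R, w 1 < w f → w 1 < w g → w (f * g) = w f + w g
  norm0 : ∀ f : R, f ≠ 0 → w f ≤ w 1 → w f = 0
  normgcd : ∀ d : ℕ, (∀ f : R, w 1 < w f → ∃ k : ℕ, w f = ((d * k : ℕ) : WithBot ℕ)) → d = 1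

namespace NearWeight

variable {F R : Type*} [Field F] [CommRing R] [Algebra F R]

def U (ρ : NearWeight F R) : Set R := {r | ρ.w r ≤ ρ.w 1}

def M (ρ : NearWeight F R) : Set R := {r | ρ.w 1 < ρ.w r}

def nval (ρ : NearWeight F R) (f : R) : ℕ := (ρ.w f).unbotD 0

def Hset (ρ σ : NearWeight F R) (S : Set R) : Set (ℕ × ℕ) :=
  {p | ∃ f ∈ S, f ≠ 0 ∧ (ρ.nval f, σ.nval f) = p}

def WellAgreeing (ρ σ : NearWeight F R) : Prop :=
  (Hset ρ σ Set.univ)ᶜ.Finite ∧ ρ.U ∩ σ.U = Set.range (algebraMap F R)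

noncomputable def xH (ρ σ : NearWeight F R) (n : ℕ) : ℕ :=
  sInf {m | (m, n) ∈ Hset ρ σ Set.univ}

noncomputable def yH (ρ σ : NearWeight F R) (n : ℕ) : ℕ :=
  sInf {m | (n, m) ∈ Hset ρ σ Set.univ}

def lub (a b : ℕ × ℕ) : ℕ × ℕ := (max a.1 b.1, max a.2 b.2)

noncomputable def Gamma (ρ σ : NearWeight F R) : Set (ℕ × ℕ) :=
  {p | ∃ m : ℕ, p = (m, yH ρ σ m)} ∪ {p | ∃ n : ℕ, p = (xH ρ σ n, n)}

def Hbarx (ρ σ : NearWeight F R) : Set ℕ := {m | (m, 0) ∈ Hset ρ σ Set.univ}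

def Hbary (ρ σ : NearWeight F R) : Set ℕ := {n | (0, n) ∈ Hset ρ σ Set.univ}

noncomputable def GammaTilde (ρ σ : NearWeight F R) : Set (ℕ × ℕ) :=
  {p | ∃ m : ℕ, m ∉ Hbarx ρ σ ∧ p = (m, yH ρ σ m)}

def Delta (p : ℕ × ℕ) : Set (ℕ × ℕ) :=
  {q | (q.1 = p.1 ∧ q.2 < p.2) ∨ (q.2 = p.2 ∧ q.1 < p.1)}

noncomputable def tw (ρ : NearWeight F R) (f : R) : ℤ :=
  sInf {z : ℤ | ∃ g ∈ ρ.M, z = (ρ.nval (f * g) : ℤ) - (ρ.nval g : ℤ)}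

end NearWeight

variable {F R : Type*} [Field F] [CommRing R] [Algebra F R]


lemma NearWeight.w_eq_nval (ρ : NearWeight F R) {f : R} (hf : f ≠ 0) :
    ρ.w f = (ρ.nval f : WithBot ℕ) := by
  have hb : ρ.w f ≠ ⊥ := by rw [Ne, ρ.N0]; exact hf
  obtain ⟨n, hn⟩ := WithBot.ne_bot_iff_exists.mp hb
  have hnv : ρ.nval f = n := by simp [NearWeight.nval, ← hn]
  rw [hnv, ← hn]
  exact_mod_cast rfl

lemma NearWeight.w_one_eq (ρ : NearWeight F R) (h1 : (1 : R) ≠ 0) : ρ.w 1 = 0 :=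
  ρ.norm0 1 h1 le_rfl

theorem stmt9
    (hinj : Function.Injective (algebraMap F R))
    (hsur : ¬ Function.Surjective (algebraMap F R))
    (ρ σ : NearWeight F R) (hwa : NearWeight.WellAgreeing ρ σ)
    (R' : Subalgebra F R)
    (h : NearWeight.Hset ρ σ (R' : Set R) = NearWeight.Hset ρ σ Set.univ) :
    R' = ⊤ := by
  have h10 : (1 : R) ≠ 0 := fun h1 => one_ne_zero (hinj (by simp [h1]))
  have key : ∀ n : ℕ, ∀ f : R, f ≠ 0 → ρ.nval f + σ.nval f ≤ n → f ∈ R' := by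
    intro n
    induction n using Nat.strong_induction_on with
    | _ n IH =>
      intro f hf hle
      have hwfρ := ρ.w_eq_nval hf
      have hwfσ := σ.w_eq_nval hf
      rcases Nat.eq_zero_or_pos (ρ.nval f) with hρ0 | hρpos
      · rcases Nat.eq_zero_or_pos (σ.nval f) with hσ0 | hσpos
        · -- both zero: f ∈ U ρ ∩ U σ
          have hmem : f ∈ ρ.U ∩ σ.U := by
            constructor
            · show ρ.w f ≤ ρ.w 1
              rw [hwfρ, hρ0, ρ.w_one_eq h10]; simp
            · show σ.w f ≤ σ.w 1
              rw [hwfσ, hσ0, σ.w_one_eq h10]; simp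
          rw [hwa.2] at hmem
          obtain ⟨c, rfl⟩ := hmem
          exact R'.algebraMap_mem c
        · -- σ branch
          have hmem : (ρ.nval f, σ.nval f) ∈ NearWeight.Hset ρ σ (R' : Set R) := by
            rw [h]; exact ⟨f, trivial, hf, rfl⟩
          obtain ⟨g, hgR, hg0, hgeq⟩ := hmem
          obtain ⟨e1, e2⟩ := Prod.mk.injEq .. ▸ hgeq
          have hwgρ := ρ.w_eq_nval hg0
          have hwgσ := σ.w_eq_nval hg0
          have hwgf : σ.w g = σ.w f := by rw [hwgσ, hwfσ, e2]
          have hMf : σ.w 1 < σ.w f := by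
            rw [σ.w_one_eq h10, hwfσ]
            exact_mod_cast hσpos
          have hMg : σ.w 1 < σ.w g := hwgf ▸ hMf
          obtain ⟨c, hc0, hlt⟩ := σ.N4 f g hMf hMg hwgf.symm
          by_cases hf' : f - c • g = 0
          · have : f = c • g := sub_eq_zero.mp hf'
            rw [this]; exact R'.smul_mem hgR c
          · have hwρ' := ρ.w_eq_nval hf'
            have hwσ' := σ.w_eq_nval hf'
            have hσlt : σ.nval (f - c • g) < σ.nval f := by
              rw [hwσ', hwfσ] at hlt; exact_mod_cast hlt
            have hρle : ρ.nval (f - c • g) ≤ ρ.nval f := by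
              have h2 : ρ.w (f - c • g) ≤ max (ρ.w f) (ρ.w (-(c • g))) := by
                have := ρ.N2 f (-(c • g)); simpa [sub_eq_add_neg] using this
              have h3 : ρ.w (-(c • g)) = ρ.w g := by
                rw [show -(c • g) = (-c) • g by simp [neg_smul]]
                exact ρ.N1 (-c) g (neg_ne_zero.mpr hc0)
              have h4 : ρ.w (f - c • g) ≤ ρ.w f := by
                rw [h3, hwgρ, e1, ← hwfρ] at h2; simpa using h2
              rw [hwρ', hwfρ] at h4; exact_mod_cast h4
            have hsum : ρ.nval (f - c • g) + σ.nval (f - c • g) < n :=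
              lt_of_lt_of_le (by omega) hle
            have hmem' := IH _ hsum (f - c • g) hf' le_rfl
            have : f = (f - c • g) + c • g := by ring
            rw [this]; exact R'.add_mem hmem' (R'.smul_mem hgR c)
      · -- ρ branch
        have hmem : (ρ.nval f, σ.nval f) ∈ NearWeight.Hset ρ σ (R' : Set R) := by
          rw [h]; exact ⟨f, trivial, hf, rfl⟩
        obtain ⟨g, hgR, hg0, hgeq⟩ := hmem
        obtain ⟨e1, e2⟩ := Prod.mk.injEq .. ▸ hgeq
        have hwgρ := ρ.w_eq_nval hg0
        have hwgσ := σ.w_eq_nval hg0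
        have hwgf : ρ.w g = ρ.w f := by rw [hwgρ, hwfρ, e1]
        have hMf : ρ.w 1 < ρ.w f := by
          rw [ρ.w_one_eq h10, hwfρ]
          exact_mod_cast hρpos
        have hMg : ρ.w 1 < ρ.w g := hwgf ▸ hMf
        obtain ⟨c, hc0, hlt⟩ := ρ.N4 f g hMf hMg hwgf.symm
        by_cases hf' : f - c • g = 0
        · have : f = c • g := sub_eq_zero.mp hf'
          rw [this]; exact R'.smul_mem hgR c
        · have hwρ' := ρ.w_eq_nval hf'
          have hwσ' := σ.w_eq_nval hf'
          have hρlt : ρ.nval (f - c • g) < ρ.nval f := by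
            rw [hwρ', hwfρ] at hlt; exact_mod_cast hlt
          have hσle : σ.nval (f - c • g) ≤ σ.nval f := by
            have h2 : σ.w (f - c • g) ≤ max (σ.w f) (σ.w (-(c • g))) := by
              have := σ.N2 f (-(c • g)); simpa [sub_eq_add_neg] using this
            have h3 : σ.w (-(c • g)) = σ.w g := by
              rw [show -(c • g) = (-c) • g by simp [neg_smul]]
              exact σ.N1 (-c) g (neg_ne_zero.mpr hc0)
            have h4 : σ.w (f - c • g) ≤ σ.w f := by
              rw [h3, hwgσ, e2, ← hwfσ] at h2; simpa using h2
            rw [hwσ', hwfσ] at h4; exact_mod_cast h4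
          have hsum : ρ.nval (f - c • g) + σ.nval (f - c • g) < n :=
            lt_of_lt_of_le (by omega) hle
          have hmem' := IH _ hsum (f - c • g) hf' le_rfl
          have : f = (f - c • g) + c • g := by ring
          rw [this]; exact R'.add_mem hmem' (R'.smul_mem hgR c)
  rw [eq_top_iff]
  intro x _
  by_cases hx : x = 0
  · rw [hx]; exact R'.zero_mem
  · exact key _ x hx le_rfl
end

section
/- Let ρ and σ be two well agreeing near weights on R. Then for all f, g ∈ R \ {0}: (4) ρ̃(fg) = ρ̃(f) + ρ̃(g); and (5) if f + g ≠ 0 then ρ̃(f + g) ≤ max{ρ̃(f), ρ̃(g)}. -/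
namespace NearWeight

section Aux

variable {F R : Type*} [Field F] [CommRing R] [Algebra F R]

lemma aux_w_one (ρ : NearWeight F R) (h1 : (1:R) ≠ 0) : ρ.w 1 = 0 := ρ.norm0 1 h1 le_rfl

lemma aux_w_ne_bot (ρ : NearWeight F R) {f : R} (hf : f ≠ 0) : ρ.w f ≠ ⊥ :=
  fun h => hf ((ρ.N0 f).mp h)

lemma aux_nval_eq (ρ : NearWeight F R) {f : R} {n : ℕ} (h : ρ.w f = (n : WithBot ℕ)) :
    ρ.nval f = n := by
  unfold nval
  rw [h]
  exact_mod_cast rfl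

lemma aux_w_coe (ρ : NearWeight F R) {f : R} (hf : f ≠ 0) :
    ρ.w f = (ρ.nval f : WithBot ℕ) := by
  obtain ⟨n, hn⟩ := WithBot.ne_bot_iff_exists.mp (ρ.aux_w_ne_bot hf)
  have hn' : ρ.w f = ((n : ℕ) : WithBot ℕ) := by exact_mod_cast hn.symm
  rw [hn', ρ.aux_nval_eq hn']

lemma aux_mem_M_iff (ρ : NearWeight F R) (h1 : (1:R) ≠ 0) {f : R} :
    f ∈ ρ.M ↔ 0 < ρ.w f := by
  rw [M, Set.mem_setOf_eq, ρ.aux_w_one h1]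

lemma aux_M_ne_zero (ρ : NearWeight F R) (h1 : (1:R) ≠ 0) {f : R} (hf : f ∈ ρ.M) :
    f ≠ 0 := by
  intro h
  have h2 := (ρ.aux_mem_M_iff h1).mp hf
  rw [h, (ρ.N0 0).mpr rfl] at h2
  simp at h2

lemma aux_M_nval (ρ : NearWeight F R) (h1 : (1:R) ≠ 0) {f : R} (hf : f ∈ ρ.M) :
    1 ≤ ρ.nval f := by
  have h2 := (ρ.aux_mem_M_iff h1).mp hf
  rw [ρ.aux_w_coe (ρ.aux_M_ne_zero h1 hf)] at h2
  exact_mod_cast h2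

lemma aux_mem_M_of_nval (ρ : NearWeight F R) (h1 : (1:R) ≠ 0) {f : R} (hf : f ≠ 0)
    (h : 1 ≤ ρ.nval f) : f ∈ ρ.M := by
  rw [ρ.aux_mem_M_iff h1, ρ.aux_w_coe hf]
  exact_mod_cast h

lemma aux_exists_mem_M (ρ : NearWeight F R) (h1 : (1:R) ≠ 0) : ∃ m, m ∈ ρ.M := by
  by_contra h
  push_neg at h
  have h0 := ρ.normgcd 0 (fun f hf => absurd (show f ∈ ρ.M from hf) (h f))
  simp at h0

lemma aux_w_smul (ρ : NearWeight F R) {c : F} (hc : c ≠ 0) (g : R) :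
    ρ.w (c • g) = ρ.w g := ρ.N1 c g hc

lemma aux_w_neg (ρ : NearWeight F R) (g : R) : ρ.w (-g) = ρ.w g := by
  rw [← neg_one_smul F g]
  exact ρ.N1 (-1) g (by norm_num)

lemma aux_w_sub_le (ρ : NearWeight F R) (a b : R) :
    ρ.w (a - b) ≤ max (ρ.w a) (ρ.w b) := by
  rw [sub_eq_add_neg]
  exact (ρ.N2 a (-b)).trans (by rw [ρ.aux_w_neg])

lemma aux_w_sub_dominant (ρ : NearWeight F R) {a b : R} (hab : ρ.w a < ρ.w b) :
    ρ.w (a - b) = ρ.w b := by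
  have hle : ρ.w (a - b) ≤ ρ.w b := (ρ.aux_w_sub_le a b).trans_eq (max_eq_right hab.le)
  refine hle.antisymm ?_
  by_contra hlt
  push_neg at hlt
  have hb : ρ.w b ≤ max (ρ.w a) (ρ.w (a - b)) := by
    have : a - (a - b) = b := sub_sub_cancel a b
    calc ρ.w b = ρ.w (a - (a - b)) := by rw [this]
    _ ≤ max (ρ.w a) (ρ.w (a - b)) := ρ.aux_w_sub_le a (a - b)
  exact absurd hb (not_le.mpr (max_lt hab hlt))

lemma aux_w_sub_smul_dominant (ρ : NearWeight F R) {a b : R} {c : F} (hc : c ≠ 0)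
    (hab : ρ.w a < ρ.w b) : ρ.w (a - c • b) = ρ.w b := by
  rw [← ρ.aux_w_smul hc b] at hab ⊢
  exact ρ.aux_w_sub_dominant hab

lemma aux_M_mul (ρ : NearWeight F R) (h1 : (1:R) ≠ 0) {a b : R} (ha : a ∈ ρ.M)
    (hb : b ∈ ρ.M) : a * b ∈ ρ.M ∧ ρ.nval (a * b) = ρ.nval a + ρ.nval b := by
  have ha0 := ρ.aux_M_ne_zero h1 ha
  have hb0 := ρ.aux_M_ne_zero h1 hb
  have hm := ρ.N5' a b ha hb
  rw [ρ.aux_w_coe ha0, ρ.aux_w_coe hb0] at hm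
  have hm' : ρ.w (a * b) = ((ρ.nval a + ρ.nval b : ℕ) : WithBot ℕ) := by exact_mod_cast hm
  refine ⟨(ρ.aux_mem_M_iff h1).mpr ?_, ρ.aux_nval_eq hm'⟩
  rw [hm']
  have h3 := ρ.aux_M_nval h1 ha
  have h4 : 0 < ρ.nval a + ρ.nval b := by omega
  exact_mod_cast h4

lemma aux_exists_h (hinj : Function.Injective (algebraMap F R))
    (ρ σ : NearWeight F R) (hwa : WellAgreeing ρ σ) {f : R} (hf : f ≠ 0) :
    ∃ h ∈ ρ.M, f * h ∈ ρ.M := by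
  have h1 : (1:R) ≠ 0 := by
    intro h
    exact one_ne_zero (hinj (show algebraMap F R 1 = algebraMap F R 0 by
      rw [map_one, map_zero, h]))
  obtain ⟨m, hm⟩ := ρ.aux_exists_mem_M h1
  by_cases hfM : f ∈ ρ.M
  · exact ⟨m, hm, (ρ.aux_M_mul h1 hfM hm).1⟩
  have hfM' : ¬ ρ.w 1 < ρ.w f := hfM
  have hwf : ρ.w f = 0 := ρ.norm0 f hf (not_lt.mp hfM')
  by_cases hfσ : f ∈ σ.M
  · -- hard case: f ∈ U_ρ ∩ M_σ
    by_contra hcon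
    push_neg at hcon
    have hbd : ∀ v, v ∈ ρ.M → ρ.w (f * v) ≤ 0 := by
      intro v hv
      by_contra hgt
      push_neg at hgt
      exact hcon v hv ((ρ.aux_mem_M_iff h1).mpr hgt)
    have claimA : ∀ v, v ∈ ρ.M → ρ.w (f * v) = 0 ∧ f * v ≠ 0 := by
      intro v hv
      have h3 := ρ.N3 1 v f (by rw [ρ.aux_w_one h1]; exact (ρ.aux_mem_M_iff h1).mp hv)
      rw [one_mul, mul_comm v f] at h3
      have heq : ρ.w (f * v) = 0 := le_antisymm (hbd v hv) (hwf ▸ h3)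
      refine ⟨heq, fun h0 => ?_⟩
      rw [h0, (ρ.N0 0).mpr rfl] at heq
      simp at heq
    have claimZ : ∀ v, v ∈ ρ.M → f * v ∈ σ.M := by
      intro v hv
      obtain ⟨hw0, hne⟩ := claimA v hv
      rw [σ.aux_mem_M_iff h1]
      rcases lt_or_ge 0 (σ.w (f * v)) with h | h
      · exact h
      · exfalso
        have hfU : f * v ∈ ρ.U ∩ σ.U := by
          constructor
          · show ρ.w (f * v) ≤ ρ.w 1
            rw [ρ.aux_w_one h1, hw0]
          · show σ.w (f * v) ≤ σ.w 1
            rw [σ.aux_w_one h1]; exact h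
        rw [hwa.2] at hfU
        obtain ⟨c, hc⟩ := hfU
        have hc0 : c ≠ 0 := by
          rintro rfl
          rw [map_zero] at hc
          exact hne hc.symm
        have hvm : v * m ∈ ρ.M := (ρ.aux_M_mul h1 hv hm).1
        have hkey : ρ.w (f * (v * m)) = ρ.w m := by
          rw [← mul_assoc, ← hc, ← Algebra.smul_def]
          exact ρ.N1 c m hc0
        have hb := hbd (v * m) hvm
        rw [hkey] at hb
        exact absurd ((ρ.aux_mem_M_iff h1).mp hm) (not_lt.mpr hb)
    -- find u ∈ M_ρ ∩ U_σ
    have hpre : ((fun n : ℕ => (n, 0)) ⁻¹' (Hset ρ σ Set.univ)ᶜ).Finite := by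
      apply Set.Finite.preimage _ hwa.1
      exact Function.Injective.injOn (fun a b hab => congrArg Prod.fst hab)
    obtain ⟨B, hB⟩ := hpre.bddAbove
    have hmem : (B + 1, 0) ∈ Hset ρ σ Set.univ := by
      by_contra hx
      have : B + 1 ∈ ((fun n : ℕ => (n, 0)) ⁻¹' (Hset ρ σ Set.univ)ᶜ) := hx
      have := hB this
      omega
    obtain ⟨u, -, hu0, hup⟩ := hmem
    have hupair : ρ.nval u = B + 1 ∧ σ.nval u = 0 := by simpa [Prod.ext_iff] using hup
    have huM : u ∈ ρ.M := ρ.aux_mem_M_of_nval h1 hu0 (by omega)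
    have huσ : σ.w u = 0 := by
      rw [σ.aux_w_coe hu0, hupair.2]
      norm_cast
    -- minimal σ-value argument
    set S : Set ℕ := {s | ∃ v, v ∈ ρ.M ∧ σ.nval (f * v) = s} with hSdef
    have hSne : S.Nonempty := ⟨σ.nval (f * u), u, huM, rfl⟩
    obtain ⟨v₀, hv₀M, hv₀s⟩ := Nat.sInf_mem hSne
    set s₀ := sInf S with hs₀def
    have hv₁M : v₀ * u ∈ ρ.M := (ρ.aux_M_mul h1 hv₀M huM).1
    have hfv₀ne := (claimA v₀ hv₀M).2
    have hfv₁ne := (claimA (v₀ * u) hv₁M).2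
    have hge : s₀ ≤ σ.nval (f * (v₀ * u)) := Nat.sInf_le ⟨v₀ * u, hv₁M, rfl⟩
    have hle : σ.nval (f * (v₀ * u)) ≤ s₀ := by
      have h5 := σ.N5 (f * v₀) u
      rw [huσ, add_zero, mul_assoc] at h5
      rw [σ.aux_w_coe hfv₁ne, σ.aux_w_coe hfv₀ne] at h5
      rw [← hv₀s]
      exact_mod_cast h5
    have heqnv : σ.nval (f * (v₀ * u)) = s₀ := le_antisymm hle hge
    have hweq : σ.w (f * v₀) = σ.w (f * (v₀ * u)) := by
      rw [σ.aux_w_coe hfv₀ne, σ.aux_w_coe hfv₁ne, hv₀s, heqnv]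
    have hltw : ρ.w v₀ < ρ.w (v₀ * u) := by
      have hv₀0 := ρ.aux_M_ne_zero h1 hv₀M
      have hv₁0 := ρ.aux_M_ne_zero h1 hv₁M
      rw [ρ.aux_w_coe hv₀0, ρ.aux_w_coe hv₁0, (ρ.aux_M_mul h1 hv₀M huM).2]
      have h6 := ρ.aux_M_nval h1 huM
      have h7 : ρ.nval v₀ < ρ.nval v₀ + ρ.nval u := by omega
      exact_mod_cast h7
    obtain ⟨c, hc0, hcl⟩ := σ.N4 (f * v₀) (f * (v₀ * u)) (claimZ v₀ hv₀M)
      (claimZ (v₀ * u) hv₁M) hweq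
    set v := v₀ - c • (v₀ * u) with hvdef
    have hfveq : f * v = f * v₀ - c • (f * (v₀ * u)) := by
      rw [hvdef, mul_sub, mul_smul_comm]
    have hwv : ρ.w v = ρ.w (v₀ * u) := ρ.aux_w_sub_smul_dominant hc0 hltw
    have hvM : v ∈ ρ.M := by
      rw [ρ.aux_mem_M_iff h1, hwv]
      exact (ρ.aux_mem_M_iff h1).mp hv₁M
    have hfvne := (claimA v hvM).2
    have hsle : s₀ ≤ σ.nval (f * v) := Nat.sInf_le ⟨v, hvM, rfl⟩
    rw [← hfveq] at hcl
    rw [σ.aux_w_coe hfvne, σ.aux_w_coe hfv₀ne, hv₀s] at hcl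
    have : σ.nval (f * v) < s₀ := by exact_mod_cast hcl
    omega
  · -- f ∈ U_ρ ∩ U_σ : f is a scalar
    have hfσ' : ¬ σ.w 1 < σ.w f := hfσ
    have hfU : f ∈ ρ.U ∩ σ.U := ⟨not_lt.mp hfM', not_lt.mp hfσ'⟩
    rw [hwa.2] at hfU
    obtain ⟨c, hc⟩ := hfU
    have hc0 : c ≠ 0 := by
      rintro rfl
      rw [map_zero] at hc
      exact hf hc.symm
    refine ⟨m, hm, ?_⟩
    have hkey : ρ.w (f * m) = ρ.w m := by
      rw [← hc, ← Algebra.smul_def]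
      exact ρ.N1 c m hc0
    rw [ρ.aux_mem_M_iff h1, hkey]
    exact (ρ.aux_mem_M_iff h1).mp hm

lemma aux_tw_isLeast (ρ : NearWeight F R) (h1 : (1:R) ≠ 0) {f h : R} (hh : h ∈ ρ.M)
    (hfh : f * h ∈ ρ.M) :
    IsLeast {z : ℤ | ∃ g ∈ ρ.M, z = (ρ.nval (f * g) : ℤ) - (ρ.nval g : ℤ)}
      ((ρ.nval (f * h) : ℤ) - (ρ.nval h : ℤ)) := by
  constructor
  · exact ⟨h, hh, rfl⟩
  · rintro z ⟨g, hg, rfl⟩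
    have hprod := ρ.aux_M_mul h1 hfh hg
    have hfg0 : f * g ≠ 0 := by
      intro h0
      have hz : f * h * g = 0 := by rw [mul_right_comm, h0, zero_mul]
      exact (ρ.aux_M_ne_zero h1 hprod.1) hz
    have h5 := ρ.N5 (f * g) h
    rw [mul_right_comm f g h] at h5
    rw [ρ.aux_w_coe (ρ.aux_M_ne_zero h1 hprod.1), ρ.aux_w_coe hfg0,
      ρ.aux_w_coe (ρ.aux_M_ne_zero h1 hh)] at h5
    have hnat : ρ.nval (f * h * g) ≤ ρ.nval (f * g) + ρ.nval h := by exact_mod_cast h5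
    rw [hprod.2] at hnat
    omega

lemma aux_tw_eq (ρ : NearWeight F R) (h1 : (1:R) ≠ 0) {f h : R} (hh : h ∈ ρ.M)
    (hfh : f * h ∈ ρ.M) :
    ρ.tw f = (ρ.nval (f * h) : ℤ) - (ρ.nval h : ℤ) :=
  (ρ.aux_tw_isLeast h1 hh hfh).csInf_eq

end Aux

end NearWeight

variable {F R : Type*} [Field F] [CommRing R] [Algebra F R]

theorem stmt18
    (hinj : Function.Injective (algebraMap F R))
    (hsur : ¬ Function.Surjective (algebraMap F R))
    (ρ σ : NearWeight F R) (hwa : NearWeight.WellAgreeing ρ σ)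
    (f g : R) (hf : f ≠ 0) (hg : g ≠ 0) :
    NearWeight.tw ρ (f * g) = NearWeight.tw ρ f + NearWeight.tw ρ g ∧
    (f + g ≠ 0 → NearWeight.tw ρ (f + g) ≤ max (NearWeight.tw ρ f) (NearWeight.tw ρ g)) := by
  have h1 : (1:R) ≠ 0 := by
    intro h
    exact one_ne_zero (hinj (show algebraMap F R 1 = algebraMap F R 0 by
      rw [map_one, map_zero, h]))
  obtain ⟨hF, hFM, hfF⟩ := NearWeight.aux_exists_h hinj ρ σ hwa hf
  obtain ⟨hG, hGM, hgG⟩ := NearWeight.aux_exists_h hinj ρ σ hwa hg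
  have hhM : hF * hG ∈ ρ.M := (ρ.aux_M_mul h1 hFM hGM).1
  have hhnv : ρ.nval (hF * hG) = ρ.nval hF + ρ.nval hG := (ρ.aux_M_mul h1 hFM hGM).2
  have hassoc : f * g * (hF * hG) = (f * hF) * (g * hG) := by ring
  have hfgh : f * g * (hF * hG) ∈ ρ.M := by
    rw [hassoc]; exact (ρ.aux_M_mul h1 hfF hgG).1
  have hfghnv : ρ.nval (f * g * (hF * hG)) = ρ.nval (f * hF) + ρ.nval (g * hG) := by
    rw [hassoc]; exact (ρ.aux_M_mul h1 hfF hgG).2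
  have htwf := ρ.aux_tw_eq h1 hFM hfF
  have htwg := ρ.aux_tw_eq h1 hGM hgG
  have htwfg := ρ.aux_tw_eq h1 hhM hfgh
  constructor
  · rw [htwf, htwg, htwfg, hfghnv, hhnv]
    push_cast
    ring
  · intro hfg0
    obtain ⟨h₀, h₀M, hsumM⟩ := NearWeight.aux_exists_h hinj ρ σ hwa hfg0
    have least := ρ.aux_tw_isLeast h1 h₀M hsumM
    have htws := ρ.aux_tw_eq h1 h₀M hsumM
    have hstep : ρ.tw (f + g) ≤ (ρ.nval ((f + g) * (hF * hG)) : ℤ) - ρ.nval (hF * hG) := by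
      rw [htws]
      exact least.2 ⟨hF * hG, hhM, rfl⟩
    have hfhM : f * (hF * hG) ∈ ρ.M ∧
        ρ.nval (f * (hF * hG)) = ρ.nval (f * hF) + ρ.nval hG := by
      rw [← mul_assoc]; exact ρ.aux_M_mul h1 hfF hGM
    have hghM : g * (hF * hG) ∈ ρ.M ∧
        ρ.nval (g * (hF * hG)) = ρ.nval (g * hG) + ρ.nval hF := by
      have hr : g * (hF * hG) = (g * hG) * hF := by ring
      rw [hr]; exact ρ.aux_M_mul h1 hgG hFM
    have hsne : (f + g) * (hF * hG) ≠ 0 := by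
      intro h0
      have hzz : (f + g) * h₀ * (hF * hG) = 0 := by
        rw [mul_right_comm, h0, zero_mul]
      exact ρ.aux_M_ne_zero h1 (ρ.aux_M_mul h1 hsumM hhM).1 hzz
    have h2 := ρ.N2 (f * (hF * hG)) (g * (hF * hG))
    rw [← add_mul] at h2
    rw [ρ.aux_w_coe hsne, ρ.aux_w_coe (ρ.aux_M_ne_zero h1 hfhM.1),
      ρ.aux_w_coe (ρ.aux_M_ne_zero h1 hghM.1)] at h2
    have hmax : ρ.nval ((f + g) * (hF * hG)) ≤
        max (ρ.nval (f * (hF * hG))) (ρ.nval (g * (hF * hG))) := by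
      rcases le_max_iff.mp h2 with h' | h'
      · exact le_max_iff.mpr (Or.inl (by exact_mod_cast h'))
      · exact le_max_iff.mpr (Or.inr (by exact_mod_cast h'))
    rw [htwf, htwg]
    rw [hfhM.2, hghM.2] at hmax
    rw [hhnv] at hstep
    omega
end
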